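/- Let g : {0,1}³ → {0,1} be permutive in the top variable (for all fixed y,z the map x ↦ g(x,y,z) is a bijection). Then for every n ≥ 1 and every triangular block b of size n, the number of triangular blocks c of size n+1 with g(c) = b is exactly 2^(n+1). -/

import Mathlib

/-- The set of lattice positions of a triangular block of size `r`:
pairs `(i,j)` with `i,j ≥ 1` and `i + j ≤ r + 1`. -/
def Tri (r : ℕ) : Finset (ℕ × ℕ) :=
  (Finset.range (r + 2) ×ˢ Finset.range (r + 2)).filter
    (fun p => 1 ≤ p.1 ∧ 1 ≤ p.2 ∧ p.1 + p.2 ≤ r + 1)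

/-- A triangular block of size `r`: an assignment of values in `{0,1}` to the
positions of `Tri r`. -/
def TriBlock (r : ℕ) := {p // p ∈ Tri r} → Fin 2

instance (r : ℕ) : Fintype (TriBlock r) := by unfold TriBlock; infer_instance
instance (r : ℕ) : DecidableEq (TriBlock r) := by unfold TriBlock; infer_instance

/-- Extend a triangular block to a total function on `ℕ × ℕ` (zero outside). -/
def ext {r : ℕ} (b : TriBlock r) : ℕ → ℕ → Fin 2 :=
  fun i j => if h : (i, j) ∈ Tri r then b ⟨(i, j), h⟩ else 0

/-- The value of block `b` at position `(i,j)` (zero outside the block). -/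
def cell {r : ℕ} (b : TriBlock r) (i j : ℕ) : Fin 2 := ext b i j

/-- One application of the local rule `g` (arguments: top, center, right)
at every site: `c(i,j) = g(b(i,j+1), b(i,j), b(i+1,j))`. -/
def step (g : Fin 2 → Fin 2 → Fin 2 → Fin 2) (s : ℕ → ℕ → Fin 2) : ℕ → ℕ → Fin 2 :=
  fun i j => g (s i (j + 1)) (s i j) (s (i + 1) j)

/-- Restrict a total function to a triangular block of size `r`. -/
def contract (r : ℕ) (s : ℕ → ℕ → Fin 2) : TriBlock r := fun q => s q.1.1 q.1.2

/-- The block evolution operator: maps a block of size `m` (intended `m = r+1`)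
to a block of size `r` via `c(i,j) = g(b(i,j+1), b(i,j), b(i+1,j))`. -/
def evolve (g : Fin 2 → Fin 2 → Fin 2 → Fin 2) {m : ℕ} (r : ℕ) (b : TriBlock m) :
    TriBlock r := contract r (step g (ext b))

/-- The `n`-fold iterate of the block evolution operator, from blocks of size `m`
(intended `m = r + n`) to blocks of size `r`. -/
def evolveN (g : Fin 2 → Fin 2 → Fin 2 → Fin 2) (n : ℕ) {m : ℕ} (r : ℕ)
    (b : TriBlock m) : TriBlock r := contract r ((step g)^[n] (ext b))

/-- The single-cell block consisting of a `1`. -/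
def oneBlock : TriBlock 1 := fun _ => 1

/-- Number of cells in state 1 in a block. -/
def numOnes {r : ℕ} (b : TriBlock r) : ℕ :=
  (@Finset.filter _ (fun x => b x = 1) (fun x => instDecidableEqFin 2 (b x) 1) Finset.univ).card

/-- Number of cells in state 0 in a block. -/
def numZeros {r : ℕ} (b : TriBlock r) : ℕ :=
  (@Finset.filter _ (fun x => b x = 0) (fun x => instDecidableEqFin 2 (b x) 0) Finset.univ).card

/-- The set of `n`-step preimages of the single-cell block `1`:
blocks of size `n + 1` mapped by `n` iterations of the block evolution
operator of `g` to the single cell `1`. -/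
def preimages (g : Fin 2 → Fin 2 → Fin 2 → Fin 2) (n : ℕ) :
    Finset (TriBlock (n + 1)) :=
  Finset.univ.filter (fun b => evolveN g n 1 b = oneBlock)

/-- `Pₙ(1)`: the density of ones after `n` iterations, starting from a
Bernoulli-`ρ` initial measure, computed by summing the probabilities of all
`n`-step preimages of the single cell `1`. -/
noncomputable def Pn (g : Fin 2 → Fin 2 → Fin 2 → Fin 2) (n : ℕ) (ρ : ℝ) : ℝ :=
  ∑ a ∈ preimages g n, ρ ^ numOnes a * (1 - ρ) ^ numZeros a


lemma mem_Tri {r i j : ℕ} : (i, j) ∈ Tri r ↔ 1 ≤ i ∧ 1 ≤ j ∧ i + j ≤ r + 1 := by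
  simp only [Tri, Finset.mem_filter, Finset.mem_product, Finset.mem_range]
  omega

lemma cell_eq {r : ℕ} (b : TriBlock r) {i j : ℕ} (h : (i, j) ∈ Tri r) :
    cell b i j = b ⟨(i, j), h⟩ := by
  simp [cell, ext, h]

lemma evolve_cell (g : Fin 2 → Fin 2 → Fin 2 → Fin 2) {m r : ℕ} (c : TriBlock m)
    {i j : ℕ} (h : (i, j) ∈ Tri r) :
    (evolve g r c) ⟨(i, j), h⟩ = g (cell c i (j + 1)) (cell c i j) (cell c (i + 1) j) := rfl

/-- Inverse of `g` in its first variable. -/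
noncomputable def ginv (g : Fin 2 → Fin 2 → Fin 2 → Fin 2)
    (hg : ∀ y z, Function.Bijective (fun x => g x y z)) (y z : Fin 2) : Fin 2 → Fin 2 :=
  (Equiv.ofBijective (fun x => g x y z) (hg y z)).symm

lemma g_ginv (g : Fin 2 → Fin 2 → Fin 2 → Fin 2)
    (hg : ∀ y z, Function.Bijective (fun x => g x y z)) (y z w : Fin 2) :
    g (ginv g hg y z w) y z = w :=
  (Equiv.ofBijective (fun x => g x y z) (hg y z)).apply_symm_apply w

/-- Build a preimage block from its bottom row `a` and the target values `bb`. -/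
noncomputable def build (gi : Fin 2 → Fin 2 → Fin 2 → Fin 2) (bb : ℕ → ℕ → Fin 2)
    (a : ℕ → Fin 2) : ℕ → ℕ → Fin 2
  | 0, _ => 0
  | 1, i => a i
  | (j + 2), i => gi (build gi bb a (j + 1) i) (build gi bb a (j + 1) (i + 1)) (bb i (j + 1))

/-- if `g` is permutive in the top variable, then every triangular
block of size `n` (`n ≥ 1`) has exactly `2^(n+1)` one-step preimages under the
block evolution operator. -/
theorem stmt7 (g : Fin 2 → Fin 2 → Fin 2 → Fin 2)
    (hg : ∀ y z, Function.Bijective (fun x => g x y z))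
    (n : ℕ) (hn : 1 ≤ n) (b : TriBlock n) :
    (Finset.univ.filter (fun c : TriBlock (n + 1) => evolve g n c = b)).card
      = 2 ^ (n + 1) := by
  classical
  have ginj : ∀ y z, Function.Injective (fun x => g x y z) := fun y z => (hg y z).1
  have hcard :
      (Finset.univ.filter (fun c : TriBlock (n + 1) => evolve g n c = b)).card
        = (Finset.univ : Finset (Fin (n + 1) → Fin 2)).card := by
    apply Finset.card_bij (fun c _ => (fun i : Fin (n + 1) => cell c ((i : ℕ) + 1) 1))
    · intro _ _; exact Finset.mem_univ _
    · -- injectivity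
      intro c hc c' hc' hrow
      simp only [Finset.mem_filter, Finset.mem_univ, true_and] at hc hc'
      have main : ∀ j i, (i, j) ∈ Tri (n + 1) → cell c i j = cell c' i j := by
        intro j
        induction j with
        | zero => intro i h; rw [mem_Tri] at h; omega
        | succ j ih =>
          intro i h
          rw [mem_Tri] at h
          match j, ih, h with
          | 0, _, h =>
            obtain ⟨k, rfl⟩ : ∃ k, i = k + 1 := ⟨i - 1, by omega⟩
            exact congrFun hrow ⟨k, by omega⟩
          | (j + 1), ih, h =>
            have hq : (i, j + 1) ∈ Tri n := mem_Tri.2 (by omega)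
            have e1 := (evolve_cell g c hq).symm.trans (congrFun hc ⟨(i, j + 1), hq⟩)
            have e2 := (evolve_cell g c' hq).symm.trans (congrFun hc' ⟨(i, j + 1), hq⟩)
            have h1 : cell c i (j + 1) = cell c' i (j + 1) :=
              ih i (mem_Tri.2 (by omega))
            have h2 : cell c (i + 1) (j + 1) = cell c' (i + 1) (j + 1) :=
              ih (i + 1) (mem_Tri.2 (by omega))
            have e3 := e1.trans e2.symm
            rw [h1, h2] at e3
            exact ginj _ _ e3
      funext q
      obtain ⟨⟨i, j⟩, hq⟩ := q
      rw [← cell_eq c hq, ← cell_eq c' hq]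
      exact main j i hq
    · -- surjectivity
      intro f _
      set a : ℕ → Fin 2 := fun i => if h : i - 1 < n + 1 then f ⟨i - 1, h⟩ else 0 with ha
      set c : TriBlock (n + 1) := fun q => build (ginv g hg) (cell b) a q.1.2 q.1.1 with hcdef
      have hcell : ∀ i j, (i, j) ∈ Tri (n + 1) →
          cell c i j = build (ginv g hg) (cell b) a j i := fun i j h => cell_eq c h
      have hev : evolve g n c = b := by
        funext q
        obtain ⟨⟨i, j⟩, hq⟩ := q
        rw [evolve_cell g c hq]
        have hm := mem_Tri.1 hq
        rw [hcell i (j + 1) (mem_Tri.2 (by omega)), hcell i j (mem_Tri.2 (by omega)),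
            hcell (i + 1) j (mem_Tri.2 (by omega))]
        obtain ⟨k, rfl⟩ : ∃ k, j = k + 1 := ⟨j - 1, by omega⟩
        show g (build (ginv g hg) (cell b) a (k + 2) i) _ _ = _
        rw [build, g_ginv g hg]
        exact cell_eq b hq
      refine ⟨c, Finset.mem_filter.2 ⟨Finset.mem_univ _, hev⟩, ?_⟩
      funext i
      rw [hcell ((i : ℕ) + 1) 1 (mem_Tri.2 (by have := i.isLt; omega))]
      show a ((i : ℕ) + 1) = f i
      rw [ha]
      simp only
      rw [dif_pos (by have := i.isLt; omega : (i : ℕ) + 1 - 1 < n + 1)]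
      congr 1
  rw [hcard, Finset.card_univ]
  simp
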